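/- Let G ⊆ ℂ×ℂ be open and connected and let ψ = (φ₁,φ₂) : ℂ×ℂ → ℂ×ℂ be continuous on G. Then the bicomplex line integral of ψ vanishes over every closed continuously differentiable curve in G if and only if there exist Φ₁, Φ₂ : ℂ×ℂ → ℂ that are ℂ-differentiable on G, satisfy the bicomplex Cauchy–Riemann equations on G, and satisfy ∂Φ₁/∂a = φ₁ and ∂Φ₂/∂a = φ₂ on G (i.e. ψ is the derivative of a holomorphic bicomplex function on G). -/

import Mathlib

open Set intervalIntegral

def bmul (p q : ℂ × ℂ) : ℂ × ℂ := (p.1 * q.1 - p.2 * q.2, p.2 * q.1 + p.1 * q.2)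

namespace BC

lemma bmul_add (x y z : ℂ × ℂ) : bmul x (y + z) = bmul x y + bmul x z := by
  simp only [bmul, Prod.mk_add_mk, Prod.fst_add, Prod.snd_add, Prod.mk.injEq]
  constructor <;> ring

lemma bmul_csmul (c : ℂ) (x y : ℂ × ℂ) : bmul x (c • y) = c • bmul x y := by
  simp only [bmul, Prod.smul_fst, Prod.smul_snd, Prod.smul_mk, smul_eq_mul, Prod.mk.injEq]
  constructor <;> ring

lemma bmul_smul (c : ℝ) (x y : ℂ × ℂ) : bmul x (c • y) = c • bmul x y := by
  have : (c : ℂ) • y = c • y := by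
    simp [Prod.ext_iff, Complex.real_smul]
  rw [← this, bmul_csmul]
  simp [Prod.ext_iff, Complex.real_smul]

lemma bmul_zero (x : ℂ × ℂ) : bmul x 0 = 0 := by simp [bmul]

lemma bmul_neg (x y : ℂ × ℂ) : bmul x (-y) = -bmul x y := by
  simp [bmul, Prod.ext_iff]; constructor <;> ring

lemma sub_bmul (x y z : ℂ × ℂ) : bmul (x - y) z = bmul x z - bmul y z := by
  simp [bmul, Prod.ext_iff]; constructor <;> ring

lemma continuous_bmul : Continuous (fun q : (ℂ × ℂ) × (ℂ × ℂ) => bmul q.1 q.2) := by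
  unfold bmul; fun_prop

lemma norm_bmul_le (x y : ℂ × ℂ) : ‖bmul x y‖ ≤ 2 * ‖x‖ * ‖y‖ := by
  have h1 : ‖x.1‖ ≤ ‖x‖ := norm_fst_le x
  have h2 : ‖x.2‖ ≤ ‖x‖ := norm_snd_le x
  have h3 : ‖y.1‖ ≤ ‖y‖ := norm_fst_le y
  have h4 : ‖y.2‖ ≤ ‖y‖ := norm_snd_le y
  have hx := norm_nonneg x
  have hy := norm_nonneg y
  rw [Prod.norm_def]
  apply max_le
  · calc ‖x.1 * y.1 - x.2 * y.2‖ ≤ ‖x.1 * y.1‖ + ‖x.2 * y.2‖ := norm_sub_le _ _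
    _ = ‖x.1‖ * ‖y.1‖ + ‖x.2‖ * ‖y.2‖ := by simp [norm_mul]
    _ ≤ ‖x‖ * ‖y‖ + ‖x‖ * ‖y‖ := by gcongr
    _ = 2 * ‖x‖ * ‖y‖ := by ring
  · calc ‖x.2 * y.1 + x.1 * y.2‖ ≤ ‖x.2 * y.1‖ + ‖x.1 * y.2‖ := norm_add_le _ _
    _ = ‖x.2‖ * ‖y.1‖ + ‖x.1‖ * ‖y.2‖ := by simp [norm_mul]
    _ ≤ ‖x‖ * ‖y‖ + ‖x‖ * ‖y‖ := by gcongr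
    _ = 2 * ‖x‖ * ‖y‖ := by ring

noncomputable def bmulCLM (x : ℂ × ℂ) : (ℂ × ℂ) →L[ℂ] (ℂ × ℂ) :=
  LinearMap.toContinuousLinearMap
    { toFun := fun y => bmul x y
      map_add' := fun y z => bmul_add x y z
      map_smul' := fun c y => bmul_csmul c x y }

@[simp] lemma bmulCLM_apply (x y : ℂ × ℂ) : bmulCLM x y = bmul x y := rfl

/-- the smooth step -/
noncomputable def sg (t : ℝ) : ℝ := 3 * t ^ 2 - 2 * t ^ 3
noncomputable def sg' (t : ℝ) : ℝ := 6 * t - 6 * t ^ 2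

lemma sg_hasDerivAt (t : ℝ) : HasDerivAt sg (sg' t) t := by
  have h : HasDerivAt (fun t : ℝ => 3 * t ^ 2 - 2 * t ^ 3)
      (3 * (2 * t ^ 1) - 2 * (3 * t ^ 2)) t :=
    ((hasDerivAt_pow 2 t).const_mul 3).sub ((hasDerivAt_pow 3 t).const_mul 2)
  convert h using 1
  · rfl
  · unfold sg'; ring

lemma continuous_sg' : Continuous sg' := by unfold sg'; fun_prop

lemma sg_zero : sg 0 = 0 := by simp [sg]
lemma sg_one : sg 1 = 1 := by norm_num [sg]
lemma sg'_zero : sg' 0 = 0 := by simp [sg']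
lemma sg'_one : sg' 1 = 0 := by norm_num [sg']

lemma sg_mem (t : ℝ) (ht : t ∈ Icc (0:ℝ) 1) : sg t ∈ Icc (0:ℝ) 1 := by
  obtain ⟨h0, h1⟩ := ht
  unfold sg
  constructor
  · nlinarith [sq_nonneg t]
  · nlinarith [sq_nonneg (1 - t), sq_nonneg t]

lemma sg'_mem (t : ℝ) (ht : t ∈ Icc (0:ℝ) 1) : sg' t ∈ Icc (0:ℝ) (3/2) := by
  obtain ⟨h0, h1⟩ := ht
  unfold sg'
  constructor
  · nlinarith
  · nlinarith [sq_nonneg (2 * t - 1)]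

lemma integral_sg' : ∫ t in (0:ℝ)..1, sg' t = 1 := by
  rw [intervalIntegral.integral_eq_sub_of_hasDerivAt
      (fun t _ => sg_hasDerivAt t) (continuous_sg'.intervalIntegrable 0 1)]
  simp [sg_zero, sg_one]


def IsPath (G : Set (ℂ × ℂ)) (x y : ℂ × ℂ) (p p' : ℝ → ℂ × ℂ) : Prop :=
  (∀ t, HasDerivAt p (p' t) t) ∧ Continuous p' ∧ (∀ t ∈ Icc (0:ℝ) 1, p t ∈ G) ∧
    p 0 = x ∧ p 1 = y ∧ p' 0 = 0 ∧ p' 1 = 0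

noncomputable def pInt (ψ : ℂ × ℂ → ℂ × ℂ) (p p' : ℝ → ℂ × ℂ) : ℂ × ℂ :=
  ∫ t in (0:ℝ)..1, bmul (ψ (p t)) (p' t)

variable {G : Set (ℂ × ℂ)} {x y z : ℂ × ℂ} {p p' q q' : ℝ → ℂ × ℂ} {ψ : ℂ × ℂ → ℂ × ℂ}

lemma IsPath.cont (h : IsPath G x y p p') : Continuous p :=
  continuous_iff_continuousAt.2 fun t => (h.1 t).continuousAt

lemma IsPath.integrand_contOn (h : IsPath G x y p p') (hc : ContinuousOn ψ G) :
    ContinuousOn (fun t => bmul (ψ (p t)) (p' t)) (Icc (0:ℝ) 1) := by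
  exact continuous_bmul.comp_continuousOn
    (ContinuousOn.prodMk (hc.comp h.cont.continuousOn h.2.2.1) h.2.1.continuousOn)

lemma IsPath.intervalIntegrable (h : IsPath G x y p p') (hc : ContinuousOn ψ G)
    {a b : ℝ} (hab : Icc a b ⊆ Icc (0:ℝ) 1) (hle : a ≤ b) :
    IntervalIntegrable (fun t => bmul (ψ (p t)) (p' t)) MeasureTheory.volume a b := by
  apply ContinuousOn.intervalIntegrable
  rw [uIcc_of_le hle]
  exact (h.integrand_contOn hc).mono hab

lemma isPath_const (hx : x ∈ G) : IsPath G x x (fun _ => x) (fun _ => 0) :=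
  ⟨fun t => hasDerivAt_const t x, continuous_const, fun _ _ => hx,
    rfl, rfl, rfl, rfl⟩

lemma pInt_const : pInt ψ (fun _ => x) (fun _ => 0) = 0 := by
  simp [pInt, bmul_zero]

/-- segment path -/
noncomputable def segP (x y : ℂ × ℂ) (t : ℝ) : ℂ × ℂ := x + sg t • (y - x)
noncomputable def segP' (x y : ℂ × ℂ) (t : ℝ) : ℂ × ℂ := sg' t • (y - x)

lemma isPath_seg (hseg : ∀ t ∈ Icc (0:ℝ) 1, x + sg t • (y - x) ∈ G) :
    IsPath G x y (segP x y) (segP' x y) := by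
  refine ⟨fun t => ((sg_hasDerivAt t).smul_const (y - x)).const_add x,
    (continuous_sg'.smul continuous_const), hseg, ?_, ?_, ?_, ?_⟩ <;>
    simp [segP, segP', sg_zero, sg_one, sg'_zero, sg'_one]

/-- reverse path -/
lemma isPath_rev (h : IsPath G x y p p') :
    IsPath G y x (fun t => p (1 - t)) (fun t => -p' (1 - t)) := by
  obtain ⟨hd, hc', hmem, h0, h1, hp0, hp1⟩ := h
  refine ⟨fun t => ?_, ?_, fun t ht => ?_, by simpa using h1, by simpa using h0,
    by simpa using hp1, by simpa using hp0⟩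
  · have hf : HasDerivAt (fun t : ℝ => 1 - t) (-1) t := by
      exact (hasDerivAt_id' t).const_sub (1:ℝ)
    have := (hd (1 - t)).scomp t hf
    simpa [Function.comp_def] using this
  · exact (hc'.comp (by fun_prop)).neg
  · exact hmem _ ⟨by linarith [ht.2], by linarith [ht.1]⟩

lemma pInt_rev (h : IsPath G x y p p') (hc : ContinuousOn ψ G) :
    pInt ψ (fun t => p (1 - t)) (fun t => -p' (1 - t)) = -pInt ψ p p' := by
  unfold pInt
  have : ∀ t : ℝ, bmul (ψ (p (1 - t))) (-p' (1 - t))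
      = -(fun u => bmul (ψ (p u)) (p' u)) (1 - t) := fun t => bmul_neg _ _
  rw [intervalIntegral.integral_congr (g := fun t => -(fun u => bmul (ψ (p u)) (p' u)) (1 - t))
    (fun t _ => this t)]
  rw [intervalIntegral.integral_neg,
    intervalIntegral.integral_comp_sub_left (fun u => bmul (ψ (p u)) (p' u)) 1]
  norm_num


/-- concatenation -/
noncomputable def catP (p q : ℝ → ℂ × ℂ) (t : ℝ) : ℂ × ℂ :=
  if t ≤ 1/2 then p (2 * t) else q (2 * t - 1)
noncomputable def catP' (p' q' : ℝ → ℂ × ℂ) (t : ℝ) : ℂ × ℂ :=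
  if t ≤ 1/2 then (2:ℝ) • p' (2 * t) else (2:ℝ) • q' (2 * t - 1)

lemma isPath_cat (hp : IsPath G x y p p') (hq : IsPath G y z q q') :
    IsPath G x z (catP p q) (catP' p' q') := by
  obtain ⟨hpd, hpc, hpm, hp0, hp1, hd0, hd1⟩ := hp
  obtain ⟨hqd, hqc, hqm, hq0, hq1, he0, he1⟩ := hq
  have hp2 : ∀ t : ℝ, HasDerivAt (fun s => p (2 * s)) ((2:ℝ) • p' (2 * t)) t := by
    intro t
    have hin : HasDerivAt (fun s : ℝ => 2 * s) 2 t := by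
      simpa using (hasDerivAt_id t).const_mul (2:ℝ)
    exact (hpd (2 * t)).scomp t hin
  have hq2 : ∀ t : ℝ, HasDerivAt (fun s => q (2 * s - 1)) ((2:ℝ) • q' (2 * t - 1)) t := by
    intro t
    have hin : HasDerivAt (fun s : ℝ => 2 * s - 1) 2 t := by
      simpa using ((hasDerivAt_id t).const_mul (2:ℝ)).sub_const 1
    exact (hqd (2 * t - 1)).scomp t hin
  have hcat_eq : ∀ s : ℝ, s ∈ Ici (1/2:ℝ) → catP p q s = q (2 * s - 1) := by
    intro s hs
    rcases eq_or_lt_of_le (mem_Ici.1 hs) with h | h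
    · simp only [catP, ← h, le_refl, if_pos]
      norm_num [hp1, ← hq0]
    · simp only [catP, if_neg (not_le.2 h)]
  refine ⟨fun t => ?_, ?_, fun t ht => ?_, ?_, ?_, ?_, ?_⟩
  · rcases lt_trichotomy t (1/2) with h | h | h
    · have he : catP p q =ᶠ[nhds t] fun s => p (2 * s) := by
        filter_upwards [Iio_mem_nhds h] with s hs
        simp only [catP, if_pos (le_of_lt (mem_Iio.1 hs))]
      rw [show catP' p' q' t = (2:ℝ) • p' (2 * t) by simp only [catP', if_pos (le_of_lt h)]]
      exact (hp2 t).congr_of_eventuallyEq he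
    · subst h
      have hval : catP' p' q' (1/2) = 0 := by
        norm_num [catP', hd1]
      rw [hval]
      have hleft : HasDerivWithinAt (catP p q) 0 (Iic (1/2)) (1/2) := by
        have h2 := ((hp2 (1/2)).hasDerivWithinAt (s := Iic (1/2)))
        have h0 : (2:ℝ) • p' (2 * (1/2)) = 0 := by norm_num [hd1]
        rw [h0] at h2
        apply h2.congr (fun s hs => by simp only [catP, if_pos (mem_Iic.1 hs)])
        simp [catP]
      have hright : HasDerivWithinAt (catP p q) 0 (Ici (1/2)) (1/2) := by
        have h2 := ((hq2 (1/2)).hasDerivWithinAt (s := Ici (1/2)))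
        have h0 : (2:ℝ) • q' (2 * (1/2) - 1) = 0 := by norm_num [he0]
        rw [h0] at h2
        exact h2.congr hcat_eq (hcat_eq _ (by norm_num))
      have hu := hleft.union hright
      rwa [Iic_union_Ici, hasDerivWithinAt_univ] at hu
    · have he : catP p q =ᶠ[nhds t] fun s => q (2 * s - 1) := by
        filter_upwards [Ioi_mem_nhds h] with s hs
        simp only [catP, if_neg (not_le.2 (mem_Ioi.1 hs))]
      rw [show catP' p' q' t = (2:ℝ) • q' (2 * t - 1) by
        simp only [catP', if_neg (not_le.2 h)]]
      exact (hq2 t).congr_of_eventuallyEq he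
  · apply Continuous.if_le ((hpc.comp (f := fun t : ℝ => 2 * t) (by fun_prop)).const_smul (2:ℝ))
      ((hqc.comp (f := fun t : ℝ => 2 * t - 1) (by fun_prop)).const_smul (2:ℝ)) continuous_id continuous_const
    intro s hs
    subst hs
    norm_num [hd1, he0]
  · by_cases h : t ≤ 1/2
    · simp only [catP, if_pos h]
      exact hpm _ ⟨by linarith [ht.1], by linarith⟩
    · push_neg at h
      simp only [catP, if_neg (not_le.2 h)]
      exact hqm _ ⟨by linarith, by linarith [ht.2]⟩
  · norm_num [catP, hp0]
  · norm_num [catP, hq1]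
  · norm_num [catP', hd0]
  · norm_num [catP', he1]

lemma pInt_cat (hp : IsPath G x y p p') (hq : IsPath G y z q q') (hc : ContinuousOn ψ G) :
    pInt ψ (catP p q) (catP' p' q') = pInt ψ p p' + pInt ψ q q' := by
  have hcat := isPath_cat hp hq
  set F : ℝ → ℂ × ℂ := fun t => bmul (ψ (catP p q t)) (catP' p' q' t) with hF
  have h1 : IntervalIntegrable F MeasureTheory.volume 0 (1/2) :=
    hcat.intervalIntegrable hc (Icc_subset_Icc (le_refl _) (by norm_num)) (by norm_num)
  have h2 : IntervalIntegrable F MeasureTheory.volume (1/2) 1 :=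
    hcat.intervalIntegrable hc (Icc_subset_Icc (by norm_num) (le_refl _)) (by norm_num)
  have hsplit : pInt ψ (catP p q) (catP' p' q')
      = (∫ t in (0:ℝ)..(1/2), F t) + ∫ t in (1/2:ℝ)..1, F t :=
    (intervalIntegral.integral_add_adjacent_intervals h1 h2).symm
  have e1 : (∫ t in (0:ℝ)..(1/2), F t) = pInt ψ p p' := by
    have hcg : ∀ t ∈ uIcc (0:ℝ) (1/2),
        F t = (2:ℝ) • (fun u => bmul (ψ (p u)) (p' u)) (2 * t) := by
      intro t ht
      rw [uIcc_of_le (by norm_num)] at ht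
      simp only [hF, catP, catP', if_pos ht.2, bmul_smul]
    rw [intervalIntegral.integral_congr hcg, intervalIntegral.integral_smul]
    have h3 := intervalIntegral.smul_integral_comp_mul_left (a := 0) (b := 1/2)
      (fun u => bmul (ψ (p u)) (p' u)) 2
    norm_num at h3 ⊢
    rw [h3]
    rfl
  have e2 : (∫ t in (1/2:ℝ)..1, F t) = pInt ψ q q' := by
    have hcg : ∀ t ∈ uIcc (1/2:ℝ) 1,
        F t = (2:ℝ) • (fun u => bmul (ψ (q (u - 1))) (q' (u - 1))) (2 * t) := by
      intro t ht
      rw [uIcc_of_le (by norm_num)] at ht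
      rcases eq_or_lt_of_le ht.1 with h | h
      · subst h
        norm_num [hF, catP, catP', hp.2.2.2.2.2.2, hq.2.2.2.2.2.1, bmul_zero]
      · simp only [hF, catP, catP', if_neg (not_le.2 h), bmul_smul]
    rw [intervalIntegral.integral_congr hcg, intervalIntegral.integral_smul]
    have h3 := intervalIntegral.smul_integral_comp_mul_left (a := 1/2) (b := 1)
      (fun u => bmul (ψ (q (u - 1))) (q' (u - 1))) 2
    norm_num at h3 ⊢
    rw [h3]
    have h4 := intervalIntegral.integral_comp_sub_right (a := 1) (b := 2)
      (fun u => bmul (ψ (q u)) (q' u)) 1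
    norm_num at h4
    rw [h4]
    rfl
  rw [hsplit, e1, e2]



lemma hseg_mem {G : Set (ℂ × ℂ)} (w : ℂ × ℂ) (ε : ℝ) (u v : ℂ × ℂ)
    (hb : Metric.ball w ε ⊆ G) (hu : u ∈ Metric.ball w ε) (hv : v ∈ Metric.ball w ε) :
    ∀ t ∈ Icc (0:ℝ) 1, u + sg t • (v - u) ∈ G := by
  intro t ht
  apply hb
  have hc := (convex_ball w ε) hu hv (sub_nonneg.2 (sg_mem t ht).2) (sg_mem t ht).1
    (by ring)
  have : u + sg t • (v - u) = (1 - sg t) • u + sg t • v := by module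
  rwa [this]

end BC

open BC in
theorem bicomplex_path_independence_iff_primitive (G : Set (ℂ × ℂ))
    (hG : IsOpen G) (hconn : IsConnected G) (φ₁ φ₂ : ℂ × ℂ → ℂ)
    (hc : ContinuousOn (fun q => (φ₁ q, φ₂ q)) G) :
    (∀ (r s : ℝ) (p p' : ℝ → ℂ × ℂ), r ≤ s →
        (∀ t ∈ Set.Icc r s, p t ∈ G) →
        (∀ t ∈ Set.Icc r s, HasDerivAt p (p' t) t) →
        ContinuousOn p' (Set.Icc r s) →
        p r = p s →
        ∫ t in r..s, bmul (φ₁ (p t), φ₂ (p t)) (p' t) = 0) ↔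
      (∃ Φ₁ Φ₂ : ℂ × ℂ → ℂ, ∀ q ∈ G,
        DifferentiableAt ℂ Φ₁ q ∧ DifferentiableAt ℂ Φ₂ q ∧
        fderiv ℂ Φ₁ q (1, 0) = fderiv ℂ Φ₂ q (0, 1) ∧
        fderiv ℂ Φ₂ q (1, 0) = -fderiv ℂ Φ₁ q (0, 1) ∧
        fderiv ℂ Φ₁ q (1, 0) = φ₁ q ∧ fderiv ℂ Φ₂ q (1, 0) = φ₂ q) := by
  have hψc : ContinuousOn (fun q => (φ₁ q, φ₂ q)) G := hc
  constructor
  · intro hyp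
    obtain ⟨q₀, hq₀⟩ := hconn.nonempty
    set ψ : ℂ × ℂ → ℂ × ℂ := fun q => (φ₁ q, φ₂ q) with hψ
    -- reachable set
    set S : Set (ℂ × ℂ) := {y | ∃ p p', IsPath G q₀ y p p'} with hS
    have hSsubG : S ⊆ G := by
      rintro y ⟨p, p', hp⟩
      have := hp.2.2.1 1 (by norm_num)
      rwa [hp.2.2.2.2.1] at this
    have hSopen : IsOpen S := by
      rw [Metric.isOpen_iff]
      rintro y ⟨p, p', hp⟩
      obtain ⟨ε, hε, hball⟩ := Metric.isOpen_iff.1 hG y (hSsubG ⟨p, p', hp⟩)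
      exact ⟨ε, hε, fun z hz => ⟨_, _, isPath_cat hp
        (isPath_seg (hseg_mem y ε y z hball (Metric.mem_ball_self hε) hz))⟩⟩
    have hVopen : IsOpen (G \ S) := by
      rw [Metric.isOpen_iff]
      rintro y ⟨hyG, hyS⟩
      obtain ⟨ε, hε, hball⟩ := Metric.isOpen_iff.1 hG y hyG
      refine ⟨ε, hε, fun z hz => ⟨hball hz, fun hzS => hyS ?_⟩⟩
      obtain ⟨p, p', hp⟩ := hzS
      exact ⟨_, _, isPath_cat hp
        (isPath_seg (hseg_mem y ε z y hball hz (Metric.mem_ball_self hε)))⟩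
    have hGS : G ⊆ S := by
      apply hconn.isPreconnected.subset_left_of_subset_union hSopen hVopen
      · exact Set.disjoint_left.2 fun y hyS hyV => hyV.2 hyS
      · intro y hy
        by_cases h : y ∈ S
        · exact Or.inl h
        · exact Or.inr ⟨hy, h⟩
      · exact ⟨q₀, hq₀, ⟨_, _, isPath_const hq₀⟩⟩
    have key : ∀ y, ∃ p p', (y ∈ G → IsPath G q₀ y p p') := by
      intro y
      by_cases hy : y ∈ G
      · obtain ⟨p, p', hp⟩ := hGS hy
        exact ⟨p, p', fun _ => hp⟩
      · exact ⟨fun _ => q₀, fun _ => 0, fun h => absurd h hy⟩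
    choose P P' hP using key
    set Φ : ℂ × ℂ → ℂ × ℂ := fun y => pInt ψ (P y) (P' y) with hΦdef
    have uniq : ∀ y ∈ G, ∀ p p', IsPath G q₀ y p p' → pInt ψ p p' = Φ y := by
      intro y hy p p' hp
      have hPy := hP y hy
      have hloop := isPath_cat hp (isPath_rev hPy)
      have hz : pInt ψ (catP p (fun t => P y (1 - t)))
          (catP' p' (fun t => -P' y (1 - t))) = 0 :=
        hyp 0 1 _ _ (by norm_num) hloop.2.2.1 (fun t _ => hloop.1 t)
          hloop.2.1.continuousOn (by rw [hloop.2.2.2.1, hloop.2.2.2.2.1])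
      rw [pInt_cat hp (isPath_rev hPy) hψc, pInt_rev hPy hψc] at hz
      have hval : pInt ψ p p' = pInt ψ (P y) (P' y) := add_neg_eq_zero.1 hz
      rw [hΦdef]
      exact hval
    have hasF : ∀ w ∈ G, HasFDerivAt Φ (bmulCLM (ψ w)) w := by
      intro w hw
      obtain ⟨ε, hε, hball⟩ := Metric.isOpen_iff.1 hG w hw
      have hΦeq : ∀ h : ℂ × ℂ, ‖h‖ < ε →
          Φ (w + h) = Φ w + ∫ t in (0:ℝ)..1, bmul (ψ (w + sg t • h)) (sg' t • h) := by
        intro h hh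
        have hwh : w + h ∈ Metric.ball w ε := by
          rw [Metric.mem_ball, dist_eq_norm, add_sub_cancel_left]
          exact hh
        have hsegpath : IsPath G w (w + h) (segP w (w + h)) (segP' w (w + h)) :=
          isPath_seg (hseg_mem w ε w (w + h) hball (Metric.mem_ball_self hε) hwh)
        have hcat := isPath_cat (hP w hw) hsegpath
        have := uniq (w + h) (hball hwh) _ _ hcat
        rw [pInt_cat (hP w hw) hsegpath hψc] at this
        rw [← this]
        congr 1
        unfold pInt segP segP'
        simp only [add_sub_cancel_left]
      rw [hasFDerivAt_iff_isLittleO_nhds_zero, Asymptotics.isLittleO_iff]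
      intro c hcpos
      have hψw : ContinuousAt ψ w := hψc.continuousAt (hG.mem_nhds hw)
      obtain ⟨δ₁, hδ₁, hδball⟩ := Metric.continuousAt_iff.1 hψw (c / 3) (by positivity)
      have hδpos : (0:ℝ) < min δ₁ ε := lt_min hδ₁ hε
      filter_upwards [Metric.ball_mem_nhds (0 : ℂ × ℂ) hδpos] with h hh
      rw [Metric.mem_ball, dist_zero_right] at hh
      have hhε : ‖h‖ < ε := lt_of_lt_of_le hh (min_le_right _ _)
      have hhδ : ‖h‖ < δ₁ := lt_of_lt_of_le hh (min_le_left _ _)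
      rw [hΦeq h hhε]
      have hone : (bmulCLM (ψ w)) h = ∫ t in (0:ℝ)..1, sg' t • bmul (ψ w) h := by
        rw [intervalIntegral.integral_smul_const, integral_sg', one_smul, bmulCLM_apply]
      rw [hone]
      have hint1 : IntervalIntegrable (fun t => bmul (ψ (w + sg t • h)) (sg' t • h))
          MeasureTheory.volume 0 1 := by
        have hsegpath : IsPath G w (w + h) (segP w (w + h)) (segP' w (w + h)) := by
          apply isPath_seg
          apply hseg_mem w ε w (w + h) hball (Metric.mem_ball_self hε)
          rw [Metric.mem_ball, dist_eq_norm, add_sub_cancel_left]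
          exact hhε
        have := hsegpath.intervalIntegrable hψc (le_refl _) (by norm_num)
        unfold segP segP' at this
        simpa only [add_sub_cancel_left] using this
      have hint2 : IntervalIntegrable (fun t => sg' t • bmul (ψ w) h)
          MeasureTheory.volume 0 1 :=
        (continuous_sg'.smul continuous_const).intervalIntegrable 0 1
      have heq : (Φ w + ∫ t in (0:ℝ)..1, bmul (ψ (w + sg t • h)) (sg' t • h)) - Φ w
          - (∫ t in (0:ℝ)..1, sg' t • bmul (ψ w) h)
          = ∫ t in (0:ℝ)..1,
              (bmul (ψ (w + sg t • h)) (sg' t • h) - sg' t • bmul (ψ w) h) := by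
        rw [intervalIntegral.integral_sub hint1 hint2]
        abel
      rw [heq]
      have hbound : ∀ t ∈ Set.uIoc (0:ℝ) 1,
          ‖bmul (ψ (w + sg t • h)) (sg' t • h) - sg' t • bmul (ψ w) h‖ ≤ c * ‖h‖ := by
        intro t ht
        rw [Set.uIoc_of_le (by norm_num)] at ht
        have htI : t ∈ Icc (0:ℝ) 1 := ⟨le_of_lt ht.1, ht.2⟩
        have hrep : bmul (ψ (w + sg t • h)) (sg' t • h) - sg' t • bmul (ψ w) h
            = sg' t • bmul (ψ (w + sg t • h) - ψ w) h := by
          rw [bmul_smul, sub_bmul, smul_sub]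
        rw [hrep, norm_smul, Real.norm_eq_abs, abs_of_nonneg (sg'_mem t htI).1]
        have hnear : ‖ψ (w + sg t • h) - ψ w‖ ≤ c / 3 := by
          have hd : dist (w + sg t • h) w < δ₁ := by
            rw [dist_eq_norm, add_sub_cancel_left, norm_smul, Real.norm_eq_abs,
              abs_of_nonneg (sg_mem t htI).1]
            calc sg t * ‖h‖ ≤ 1 * ‖h‖ :=
              mul_le_mul_of_nonneg_right (sg_mem t htI).2 (norm_nonneg _)
            _ = ‖h‖ := one_mul _
            _ < δ₁ := hhδ
          have := hδball hd
          rw [dist_eq_norm] at this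
          exact le_of_lt this
        calc sg' t * ‖bmul (ψ (w + sg t • h) - ψ w) h‖
            ≤ (3/2) * (2 * ‖ψ (w + sg t • h) - ψ w‖ * ‖h‖) := by
              apply mul_le_mul (sg'_mem t htI).2 (norm_bmul_le _ _) (norm_nonneg _)
                (by norm_num)
        _ ≤ (3/2) * (2 * (c / 3) * ‖h‖) := by
              have := mul_le_mul_of_nonneg_right
                (mul_le_mul_of_nonneg_left hnear (by norm_num : (0:ℝ) ≤ 2))
                (norm_nonneg h)
              nlinarith [norm_nonneg h]
        _ = c * ‖h‖ := by ring
      calc ‖∫ t in (0:ℝ)..1,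
          (bmul (ψ (w + sg t • h)) (sg' t • h) - sg' t • bmul (ψ w) h)‖
          ≤ c * ‖h‖ * |1 - 0| :=
            intervalIntegral.norm_integral_le_of_norm_le_const hbound
      _ = c * ‖h‖ := by norm_num
    -- conclude
    refine ⟨fun y => (Φ y).1, fun y => (Φ y).2, fun q hq => ?_⟩
    have hF := hasF q hq
    have h1 : HasFDerivAt (fun y => (Φ y).1)
        ((ContinuousLinearMap.fst ℂ ℂ ℂ).comp (bmulCLM (ψ q))) q :=
      (ContinuousLinearMap.fst ℂ ℂ ℂ).hasFDerivAt.comp q hF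
    have h2 : HasFDerivAt (fun y => (Φ y).2)
        ((ContinuousLinearMap.snd ℂ ℂ ℂ).comp (bmulCLM (ψ q))) q :=
      (ContinuousLinearMap.snd ℂ ℂ ℂ).hasFDerivAt.comp q hF
    refine ⟨h1.differentiableAt, h2.differentiableAt, ?_, ?_, ?_, ?_⟩ <;>
      simp [h1.fderiv, h2.fderiv, bmul, hψ]
  · rintro ⟨Φ₁, Φ₂, hΦ⟩ r s p p' hrs hpG hderiv hcont hclosed
    have hg : ∀ t ∈ Icc r s, HasDerivAt (fun u => (Φ₁ (p u), Φ₂ (p u)))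
        (bmul (φ₁ (p t), φ₂ (p t)) (p' t)) t := by
      intro t ht
      obtain ⟨hd1, hd2, e1, e2, e3, e4⟩ := hΦ (p t) (hpG t ht)
      have k1 : HasDerivAt (fun u => Φ₁ (p u)) (fderiv ℂ Φ₁ (p t) (p' t)) t := by
        have := (hd1.hasFDerivAt.restrictScalars ℝ).comp_hasDerivAt t (hderiv t ht)
        simpa [Function.comp_def] using this
      have k2 : HasDerivAt (fun u => Φ₂ (p u)) (fderiv ℂ Φ₂ (p t) (p' t)) t := by
        have := (hd2.hasFDerivAt.restrictScalars ℝ).comp_hasDerivAt t (hderiv t ht)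
        simpa [Function.comp_def] using this
      have hsplit : p' t = (p' t).1 • ((1:ℂ), (0:ℂ)) + (p' t).2 • ((0:ℂ), (1:ℂ)) := by
        simp [Prod.ext_iff]
      have v1 : fderiv ℂ Φ₁ (p t) (p' t)
          = φ₁ (p t) * (p' t).1 - φ₂ (p t) * (p' t).2 := by
        conv_lhs => rw [hsplit]
        rw [map_add, map_smul, map_smul, e3]
        have e5 : fderiv ℂ Φ₁ (p t) (0, 1) = -φ₂ (p t) := by
          linear_combination e2 - e4
        rw [e5]
        simp only [smul_eq_mul]
        ring
      have v2 : fderiv ℂ Φ₂ (p t) (p' t)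
          = φ₂ (p t) * (p' t).1 + φ₁ (p t) * (p' t).2 := by
        conv_lhs => rw [hsplit]
        rw [map_add, map_smul, map_smul, e4]
        have e6 : fderiv ℂ Φ₂ (p t) (0, 1) = φ₁ (p t) := by rw [← e1, e3]
        rw [e6]
        simp only [smul_eq_mul]
        ring
      have hpair := k1.prodMk k2
      rw [v1, v2] at hpair
      exact hpair
    have hint : IntervalIntegrable (fun t => bmul (φ₁ (p t), φ₂ (p t)) (p' t))
        MeasureTheory.volume r s := by
      apply ContinuousOn.intervalIntegrable
      rw [uIcc_of_le hrs]
      have hpc : ContinuousOn p (Icc r s) :=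
        fun t ht => (hderiv t ht).continuousAt.continuousWithinAt
      exact continuous_bmul.comp_continuousOn ((hψc.comp hpc hpG).prodMk hcont)
    have hFTC := intervalIntegral.integral_eq_sub_of_hasDerivAt
      (fun t ht => hg t (by rwa [uIcc_of_le hrs] at ht)) hint
    rw [hFTC, hclosed, sub_self]
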